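/- (w⁺ regularity implies frequency convergence.) Assume A := lim_{t→∞} ℓ_t/t exists. If μ_t → μ_* in the w⁺ sense (μ_t → μ_* weakly on [0,∞] and ∫ (1/m) dμ_t → ∫ (1/m) dμ_* < ∞) with μ_* ≠ δ_∞, then A ∈ (0,∞) and F_t converges weakly to the measure F_* given by ⟨F_*, f⟩ = (1/A) ∫ (1/m) f(m) dμ_*(m) for all f ∈ C_b([0,∞]). -/

import Mathlib

open MeasureTheory ProbabilityTheory Filter
open scoped ENNReal Topology BigOperators

noncomputable section

/-- Partial sums of the masses: `Mpart m n = ∑_{k=1}^n m k` (with `Mpart m 0 = 0`). -/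
def Mpart (m : ℕ → ℝ) (n : ℕ) : ℝ := ∑ k ∈ Finset.Icc 1 n, m k

/-- `ℓ_t = inf {ℓ : M_ℓ ≥ t}`, the index of the increment containing time `t`. -/
def ell (m : ℕ → ℝ) (t : ℝ) : ℕ := sInf {l : ℕ | t ≤ Mpart m l}

/-- `t̄ = t - M_{ℓ_t - 1}`, the elapsed part of the current increment. -/
def tbar (m : ℕ → ℝ) (t : ℝ) : ℝ := t - Mpart m (ell m t - 1)

/-- The empirical mass measure `μ_t = (t̄/t) δ_{t̄} + ∑_{k<ℓ_t} (m_k/t) δ_{m_k}`,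
as a measure on `[0,∞]` (modelled by `ℝ≥0∞`). -/
def empMass (m : ℕ → ℝ) (t : ℝ) : Measure ℝ≥0∞ :=
  ENNReal.ofReal (tbar m t / t) • Measure.dirac (ENNReal.ofReal (tbar m t)) +
  ∑ k ∈ Finset.Icc 1 (ell m t - 1),
    ENNReal.ofReal (m k / t) • Measure.dirac (ENNReal.ofReal (m k))

/-- The empirical mass frequency `F_t = (1/ℓ_t) (δ_{t̄} + ∑_{k<ℓ_t} δ_{m_k})`,
as a measure on `[0,∞]` (modelled by `ℝ≥0∞`). -/
def empFreq (m : ℕ → ℝ) (t : ℝ) : Measure ℝ≥0∞ :=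
  ((ell m t : ℝ≥0∞))⁻¹ •
    (Measure.dirac (ENNReal.ofReal (tbar m t)) +
     ∑ k ∈ Finset.Icc 1 (ell m t - 1), Measure.dirac (ENNReal.ofReal (m k)))

lemma ell_nonempty (m : ℕ → ℝ) (hdiv : Tendsto (Mpart m) atTop atTop) (t : ℝ) :
    {l : ℕ | t ≤ Mpart m l}.Nonempty := by
  obtain ⟨N, hN⟩ := (hdiv.eventually (eventually_ge_atTop t)).exists
  exact ⟨N, hN⟩

lemma ell_pos (m : ℕ → ℝ) (hdiv : Tendsto (Mpart m) atTop atTop) {t : ℝ} (ht : 0 < t) :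
    1 ≤ ell m t := by
  rcases Nat.eq_zero_or_pos (ell m t) with h | h
  · exfalso
    rcases Nat.sInf_eq_zero.1 h with h0 | h0
    · simp only [Set.mem_setOf_eq, Mpart, Finset.Icc_self, Finset.Icc_eq_empty_of_lt] at h0
      simp [Mpart] at h0
      linarith
    · exact absurd h0 (Set.Nonempty.ne_empty (ell_nonempty m hdiv t))
  · exact h

lemma tbar_pos (m : ℕ → ℝ) (hdiv : Tendsto (Mpart m) atTop atTop) {t : ℝ} (ht : 0 < t) :
    0 < tbar m t := by
  have h1 : ell m t - 1 < ell m t := Nat.sub_lt (ell_pos m hdiv ht) one_pos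
  have h2 : ell m t - 1 ∉ {l : ℕ | t ≤ Mpart m l} := Nat.notMem_of_lt_sInf h1
  simp only [Set.mem_setOf_eq, not_le] at h2
  simpa [tbar] using h2

lemma lintegral_empMass_inv (m : ℕ → ℝ) (hm : ∀ k, 0 < m k)
    (hdiv : Tendsto (Mpart m) atTop atTop) {t : ℝ} (ht : 0 < t) :
    ∫⁻ x, x⁻¹ ∂(empMass m t) = ENNReal.ofReal ((ell m t : ℝ) / t) := by
  have htb := tbar_pos m hdiv ht
  have key : ∀ a : ℝ, 0 < a →
      ENNReal.ofReal (a / t) * (ENNReal.ofReal a)⁻¹ = (ENNReal.ofReal t)⁻¹ := by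
    intro a ha
    rw [ENNReal.ofReal_div_of_pos ht, div_eq_mul_inv, mul_right_comm,
      ENNReal.mul_inv_cancel (ENNReal.ofReal_pos.2 ha).ne' ENNReal.ofReal_ne_top, one_mul]
  rw [empMass, lintegral_add_measure, lintegral_smul_measure, lintegral_dirac,
    lintegral_finset_sum_measure]
  simp only [lintegral_smul_measure, lintegral_dirac, smul_eq_mul]
  rw [key _ htb]
  rw [Finset.sum_congr rfl (fun k hk => key _ (hm k)), Finset.sum_const,
    Nat.card_Icc, nsmul_eq_mul]
  have hL := ell_pos m hdiv ht
  have h1 : ell m t - 1 + 1 - 1 = ell m t - 1 := by omega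
  rw [h1, ENNReal.ofReal_div_of_pos ht, ENNReal.ofReal_natCast, div_eq_mul_inv]
  have h2 : ((ell m t : ℝ≥0∞)) = ((ell m t - 1 : ℕ) : ℝ≥0∞) + 1 := by
    have h3 : ell m t = (ell m t - 1) + 1 := by omega
    exact_mod_cast congrArg (Nat.cast : ℕ → ℝ≥0∞) h3
  rw [h2, add_mul, one_mul, add_comm]

lemma integrable_dirac' {g : ℝ≥0∞ → ℝ} (hg : Measurable g) (a : ℝ≥0∞) :
    Integrable g (Measure.dirac a) := by
  refine ⟨hg.aestronglyMeasurable, ?_⟩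
  rw [HasFiniteIntegral, lintegral_dirac]
  exact ENNReal.coe_lt_top

lemma integral_empMass (m : ℕ → ℝ) (hm : ∀ k, 0 < m k)
    (hdiv : Tendsto (Mpart m) atTop atTop) {t : ℝ} (ht : 0 < t)
    (g : ℝ≥0∞ → ℝ) (hg : Measurable g) :
    ∫ x, g x ∂(empMass m t) = (tbar m t / t) * g (ENNReal.ofReal (tbar m t)) +
      ∑ k ∈ Finset.Icc 1 (ell m t - 1), (m k / t) * g (ENNReal.ofReal (m k)) := by
  have hd := integrable_dirac' hg
  rw [empMass, integral_add_measure ((hd _).smul_measure ENNReal.ofReal_ne_top)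
      (integrable_finset_sum_measure.2 fun k _ => (hd _).smul_measure ENNReal.ofReal_ne_top),
    integral_finset_sum_measure (fun k _ => (hd _).smul_measure ENNReal.ofReal_ne_top)]
  simp only [integral_smul_measure, integral_dirac, smul_eq_mul]
  congr 1
  · rw [ENNReal.toReal_ofReal (div_nonneg (tbar_pos m hdiv ht).le ht.le)]
  · exact Finset.sum_congr rfl fun k _ => by
      rw [ENNReal.toReal_ofReal (div_nonneg (hm k).le ht.le)]

lemma integral_empFreq (m : ℕ → ℝ) (t : ℝ) (g : ℝ≥0∞ → ℝ) (hg : Measurable g) :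
    ∫ x, g x ∂(empFreq m t) = ((ell m t : ℝ))⁻¹ *
      (g (ENNReal.ofReal (tbar m t)) +
        ∑ k ∈ Finset.Icc 1 (ell m t - 1), g (ENNReal.ofReal (m k))) := by
  have hd := integrable_dirac' hg
  rw [empFreq, integral_smul_measure,
    integral_add_measure (hd _) (integrable_finset_sum_measure.2 fun k _ => hd _),
    integral_finset_sum_measure (fun k _ => hd _)]
  simp only [integral_dirac, smul_eq_mul, ENNReal.toReal_inv]
  norm_num

instance isFiniteMeasure_empMass (m : ℕ → ℝ) (t : ℝ) : IsFiniteMeasure (empMass m t) := by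
  constructor
  rw [empMass]
  simp only [Measure.add_apply, Measure.smul_apply, smul_eq_mul, Measure.coe_finset_sum,
    Finset.sum_apply, measure_univ, mul_one]
  exact ENNReal.add_lt_top.2 ⟨ENNReal.ofReal_lt_top,
    (ENNReal.sum_lt_top).2 fun k _ => ENNReal.ofReal_lt_top⟩

lemma empMass_zero (m : ℕ → ℝ) (hm : ∀ k, 0 < m k)
    (hdiv : Tendsto (Mpart m) atTop atTop) {t : ℝ} (ht : 0 < t) :
    empMass m t {0} = 0 := by
  rw [empMass]
  simp only [Measure.add_apply, Measure.smul_apply, smul_eq_mul, Measure.coe_finset_sum,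
    Finset.sum_apply]
  rw [Measure.dirac_apply' _ (measurableSet_singleton 0)]
  have h0 : ∀ a : ℝ, 0 < a →
      Set.indicator {(0:ℝ≥0∞)} (1 : ℝ≥0∞ → ℝ≥0∞) (ENNReal.ofReal a) = 0 := by
    intro a ha
    rw [Set.indicator_of_notMem]
    simp only [Set.mem_singleton_iff]
    exact (ENNReal.ofReal_pos.2 ha).ne'
  rw [h0 _ (tbar_pos m hdiv ht), mul_zero, zero_add]
  refine Finset.sum_eq_zero fun k _ => ?_
  rw [Measure.dirac_apply' _ (measurableSet_singleton 0), h0 _ (hm k), mul_zero]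

lemma meas_zero_of_lintegral_inv_lt_top {μ : Measure ℝ≥0∞} (h : ∫⁻ x, x⁻¹ ∂μ < ⊤) :
    μ {0} = 0 := by
  by_contra h0
  have hind : ∀ x : ℝ≥0∞, Set.indicator {0} (fun _ => (⊤:ℝ≥0∞)) x ≤ x⁻¹ := by
    intro x
    by_cases hx : x ∈ ({0} : Set ℝ≥0∞)
    · simp only [Set.mem_singleton_iff] at hx; subst hx; simp
    · simp [Set.indicator_of_notMem hx]
  have h1 := lintegral_mono (μ := μ) hind
  rw [lintegral_indicator_const (measurableSet_singleton 0)] at h1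
  rw [ENNReal.top_mul h0] at h1
  exact absurd (lt_of_le_of_lt h1 h) (lt_irrefl _)

lemma continuous_min_inv_toReal (N : ℝ≥0∞) (hN : N ≠ ⊤) :
    Continuous fun x : ℝ≥0∞ => (min x⁻¹ N).toReal := by
  rw [continuous_iff_continuousAt]
  intro x
  have hc : Continuous fun x : ℝ≥0∞ => min x⁻¹ N := continuous_inv.min continuous_const
  have h1 : ContinuousAt ENNReal.toReal (min x⁻¹ N) :=
    ENNReal.tendsto_toReal (ne_top_of_le_ne_top hN (min_le_right _ _))
  exact ContinuousAt.comp (f := fun x : ℝ≥0∞ => min x⁻¹ N) (g := ENNReal.toReal) h1 hc.continuousAt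

lemma integrable_of_bounded_meas {μ : Measure ℝ≥0∞} [IsFiniteMeasure μ] {g : ℝ≥0∞ → ℝ}
    (hg : Measurable g) {C : ℝ} (hC : ∀ x, ‖g x‖ ≤ C) : Integrable g μ :=
  ⟨hg.aestronglyMeasurable, HasFiniteIntegral.of_bounded (Eventually.of_forall hC)⟩

lemma integrable_invToReal_mul {μ : Measure ℝ≥0∞} [IsFiniteMeasure μ]
    {f : ℝ≥0∞ → ℝ} (hf : Continuous f) {C : ℝ} (hC : ∀ x, |f x| ≤ C)
    (h : ∫⁻ x, x⁻¹ ∂μ ≠ ⊤) : Integrable (fun x => (x⁻¹).toReal * f x) μ := by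
  have hgm : AEStronglyMeasurable (fun x : ℝ≥0∞ => (x⁻¹).toReal * f x) μ :=
    (((measurable_inv : Measurable (Inv.inv : ℝ≥0∞ → ℝ≥0∞)).ennreal_toReal).mul hf.measurable).aestronglyMeasurable
  have hdom : Integrable (fun x : ℝ≥0∞ => (x⁻¹).toReal * C) μ :=
    (integrable_toReal_of_lintegral_ne_top (measurable_inv : Measurable (Inv.inv : ℝ≥0∞ → ℝ≥0∞)).aemeasurable h).mul_const C
  refine hdom.mono' hgm (Filter.Eventually.of_forall fun x => ?_)
  rw [Real.norm_eq_abs, abs_mul, abs_of_nonneg ENNReal.toReal_nonneg]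
  exact mul_le_mul_of_nonneg_left (hC x) ENNReal.toReal_nonneg

lemma err_bound (μ : Measure ℝ≥0∞) [IsFiniteMeasure μ] (hμ0 : μ {0} = 0)
    (hμ : ∫⁻ x, x⁻¹ ∂μ ≠ ⊤) (f : ℝ≥0∞ → ℝ) (hf : Continuous f) {C : ℝ}
    (hC : ∀ x, |f x| ≤ C) (N : ℕ) :
    |∫ x, (x⁻¹).toReal * f x ∂μ - ∫ x, (min x⁻¹ (N:ℝ≥0∞)).toReal * f x ∂μ| ≤
      C * ((∫⁻ x, x⁻¹ ∂μ).toReal - (∫⁻ x, min x⁻¹ (N:ℝ≥0∞) ∂μ).toReal) := by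
  have hae0 : ∀ᵐ x ∂μ, x ≠ 0 := by
    rw [ae_iff]
    convert hμ0 using 2
    ext x; simp
  have hmin_meas : Measurable fun x : ℝ≥0∞ => min x⁻¹ (N:ℝ≥0∞) :=
    (measurable_inv : Measurable (Inv.inv : ℝ≥0∞ → ℝ≥0∞)).min measurable_const
  have hg : Integrable (fun x : ℝ≥0∞ => (x⁻¹).toReal * f x) μ :=
    integrable_invToReal_mul hf hC hμ
  have hφ : Integrable (fun x : ℝ≥0∞ => (min x⁻¹ (N:ℝ≥0∞)).toReal * f x) μ := by
    refine integrable_of_bounded_meas ((hmin_meas.ennreal_toReal).mul hf.measurable)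
      (C := (N:ℝ) * C) fun x => ?_
    rw [Real.norm_eq_abs, abs_mul, abs_of_nonneg ENNReal.toReal_nonneg]
    refine mul_le_mul ?_ (hC x) (abs_nonneg _) (Nat.cast_nonneg N)
    have := ENNReal.toReal_mono (ENNReal.natCast_ne_top N) (min_le_right (x⁻¹) (N:ℝ≥0∞))
    simpa using this
  have hIinv : Integrable (fun x : ℝ≥0∞ => (x⁻¹).toReal) μ :=
    integrable_toReal_of_lintegral_ne_top (measurable_inv : Measurable (Inv.inv : ℝ≥0∞ → ℝ≥0∞)).aemeasurable hμ
  have hImin : Integrable (fun x : ℝ≥0∞ => (min x⁻¹ (N:ℝ≥0∞)).toReal) μ := by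
    refine integrable_of_bounded_meas (hmin_meas.ennreal_toReal) (C := (N:ℝ)) fun x => ?_
    rw [Real.norm_eq_abs, abs_of_nonneg ENNReal.toReal_nonneg]
    have := ENNReal.toReal_mono (ENNReal.natCast_ne_top N) (min_le_right (x⁻¹) (N:ℝ≥0∞))
    simpa using this
  rw [← integral_sub hg hφ]
  have h1 : |∫ x, ((x⁻¹).toReal * f x - (min x⁻¹ (N:ℝ≥0∞)).toReal * f x) ∂μ| ≤
      ∫ x, C * ((x⁻¹).toReal - (min x⁻¹ (N:ℝ≥0∞)).toReal) ∂μ := by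
    have habs := norm_integral_le_integral_norm (μ := μ)
      (f := fun x : ℝ≥0∞ => (x⁻¹).toReal * f x - (min x⁻¹ (N:ℝ≥0∞)).toReal * f x)
    simp only [Real.norm_eq_abs] at habs
    refine habs.trans ?_
    refine integral_mono_ae ((hg.sub hφ).abs) ((hIinv.sub hImin).const_mul C) ?_
    filter_upwards [hae0] with x hx
    have hxinv : x⁻¹ ≠ ⊤ := by simpa [ENNReal.inv_ne_top] using hx
    have hle : (min x⁻¹ (N:ℝ≥0∞)).toReal ≤ (x⁻¹).toReal :=
      ENNReal.toReal_mono hxinv (min_le_left _ _)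
    rw [← sub_mul, abs_mul, abs_of_nonneg (sub_nonneg.2 hle), mul_comm]
    exact mul_le_mul_of_nonneg_right (hC x) (sub_nonneg.2 hle)
  refine h1.trans_eq ?_
  rw [integral_const_mul, integral_sub hIinv hImin,
    integral_toReal (measurable_inv : Measurable (Inv.inv : ℝ≥0∞ → ℝ≥0∞)).aemeasurable
      (by filter_upwards [hae0] with x hx; exact ENNReal.inv_lt_top.2 (pos_iff_ne_zero.2 hx)),
    integral_toReal hmin_meas.aemeasurable
      (Eventually.of_forall fun x => lt_of_le_of_lt (min_le_right _ _) (ENNReal.natCast_lt_top N))]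

lemma freq_eq_mass (m : ℕ → ℝ) (hm : ∀ k, 0 < m k)
    (hdiv : Tendsto (Mpart m) atTop atTop) {t : ℝ} (ht : 0 < t)
    (f : ℝ≥0∞ → ℝ) (hfm : Measurable f) :
    ∫ x, f x ∂(empFreq m t) =
      (t / (ell m t : ℝ)) * ∫ x, (x⁻¹).toReal * f x ∂(empMass m t) := by
  have hg : Measurable fun x : ℝ≥0∞ => (x⁻¹).toReal * f x :=
    ((measurable_inv : Measurable (Inv.inv : ℝ≥0∞ → ℝ≥0∞)).ennreal_toReal).mul hfm
  rw [integral_empFreq m t f hfm, integral_empMass m hm hdiv ht _ hg]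
  have htb := tbar_pos m hdiv ht
  have e1 : ∀ a : ℝ, 0 < a →
      (a / t) * (((ENNReal.ofReal a)⁻¹).toReal * f (ENNReal.ofReal a)) =
        t⁻¹ * f (ENNReal.ofReal a) := by
    intro a ha
    rw [ENNReal.toReal_inv, ENNReal.toReal_ofReal ha.le]
    field_simp
  rw [e1 _ htb, Finset.sum_congr rfl (fun k _ => e1 _ (hm k)), ← Finset.mul_sum]
  have hL : (0:ℝ) < (ell m t : ℝ) := by exact_mod_cast ell_pos m hdiv ht
  field_simp


/-- w⁺ regularity of the empirical mass measures implies weak convergence of the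
frequencies: if `ℓ_t/t → A`, `μ_t → μ_*` weakly with convergence of the integrals of
`1/m` (`w⁺`), and `μ_* ≠ δ_∞`, then `A ∈ (0,∞)` and `F_t` converges weakly to `F_*`
with `⟨F_*, f⟩ = (1/A) ∫ (1/m) f(m) dμ_*(m)`. -/
theorem wplus_implies_frequency_convergence (m : ℕ → ℝ) (hm : ∀ k, 0 < m k)
    (hdiv : Tendsto (Mpart m) atTop atTop)
    (A : ℝ≥0∞)
    (hA : Tendsto (fun t : ℝ => ENNReal.ofReal ((ell m t : ℝ) / t)) atTop (𝓝 A))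
    (mustar : Measure ℝ≥0∞) [IsProbabilityMeasure mustar]
    (hweak : ∀ f : ℝ≥0∞ → ℝ, Continuous f →
      Tendsto (fun t : ℝ => ∫ x, f x ∂(empMass m t)) atTop (𝓝 (∫ x, f x ∂mustar)))
    (hwplus : Tendsto (fun t : ℝ => ∫⁻ x, x⁻¹ ∂(empMass m t)) atTop
      (𝓝 (∫⁻ x, x⁻¹ ∂mustar)))
    (hfin : ∫⁻ x, x⁻¹ ∂mustar < ⊤)
    (hne : mustar ≠ Measure.dirac ⊤) :
    A ≠ 0 ∧ A ≠ ⊤ ∧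
    ∀ f : ℝ≥0∞ → ℝ, Continuous f →
      Tendsto (fun t : ℝ => ∫ x, f x ∂(empFreq m t)) atTop
        (𝓝 ((1 / A.toReal) * ∫ x, (x.toReal)⁻¹ * f x ∂mustar)) := by
  have hinv_meas : Measurable (Inv.inv : ℝ≥0∞ → ℝ≥0∞) := measurable_inv
  -- A equals the limit ∫ 1/x dμ*
  have hAeq : A = ∫⁻ x, x⁻¹ ∂mustar := by
    have heq : ∀ᶠ t in (atTop : Filter ℝ),
        ENNReal.ofReal ((ell m t : ℝ) / t) = ∫⁻ x, x⁻¹ ∂(empMass m t) := by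
      filter_upwards [eventually_gt_atTop (0:ℝ)] with t ht
      exact (lintegral_empMass_inv m hm hdiv ht).symm
    exact tendsto_nhds_unique (hA.congr' heq) hwplus
  have hAtop : A ≠ ⊤ := by rw [hAeq]; exact hfin.ne
  have hA0 : A ≠ 0 := by
    intro h0
    have hz : ∫⁻ x, x⁻¹ ∂mustar = 0 := by rw [← hAeq, h0]
    have hae := (lintegral_eq_zero_iff hinv_meas).1 hz
    have hcompl : mustar {⊤}ᶜ = 0 := by
      have h2 : {x : ℝ≥0∞ | ¬ x⁻¹ = 0} = ({⊤}ᶜ : Set ℝ≥0∞) := by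
        ext x; simp [ENNReal.inv_eq_zero]
      have h3 := hae
      rw [Filter.EventuallyEq, ae_iff] at h3
      simp only [Pi.zero_apply, ENNReal.inv_eq_zero] at h3
      have h4 : ({⊤}ᶜ : Set ℝ≥0∞) = {a : ℝ≥0∞ | ¬ a = ⊤} := by ext x; simp
      rw [h4]
      exact h3
    apply hne
    ext s hs
    rw [Measure.dirac_apply' _ hs]
    by_cases hT : (⊤:ℝ≥0∞) ∈ s
    · have h1 : mustar s ≤ 1 := prob_le_one
      have h2 : (1:ℝ≥0∞) ≤ mustar s := by
        calc (1:ℝ≥0∞) = mustar Set.univ := measure_univ.symm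
          _ = mustar ({⊤} ∪ {⊤}ᶜ) := by rw [Set.union_compl_self]
          _ ≤ mustar {⊤} + mustar {⊤}ᶜ := measure_union_le _ _
          _ = mustar {⊤} := by rw [hcompl, add_zero]
          _ ≤ mustar s := measure_mono (Set.singleton_subset_iff.2 hT)
      rw [Set.indicator_of_mem hT]
      exact le_antisymm h1 h2
    · rw [Set.indicator_of_notMem hT]
      exact measure_mono_null
        (fun x hx => by simp only [Set.mem_compl_iff, Set.mem_singleton_iff]
                        exact fun h => hT (h ▸ hx)) hcompl
  refine ⟨hA0, hAtop, ?_⟩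
  intro f hf
  -- bound on f
  obtain ⟨C, hC⟩ : ∃ C : ℝ, ∀ x, |f x| ≤ C := by
    obtain ⟨x0, -, hx0⟩ := isCompact_univ.exists_isMaxOn Set.univ_nonempty
      (hf.abs.continuousOn)
    exact ⟨|f x0|, fun x => hx0 (Set.mem_univ x)⟩
  have hC0 : (0:ℝ) ≤ C := le_trans (abs_nonneg _) (hC 0)
  have hμ0 : mustar {0} = 0 := meas_zero_of_lintegral_inv_lt_top hfin
  set R : ℝ := (∫⁻ x, x⁻¹ ∂mustar).toReal with hR
  set I : ℝ := ∫ x, (x⁻¹).toReal * f x ∂mustar with hI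
  -- notation for truncated quantities
  have hminmeas : ∀ N : ℕ, Measurable fun x : ℝ≥0∞ => min x⁻¹ (N:ℝ≥0∞) :=
    fun N => hinv_meas.min measurable_const
  have hmin_int_eq : ∀ (N : ℕ) (μ : Measure ℝ≥0∞),
      ∫ x, (min x⁻¹ (N:ℝ≥0∞)).toReal ∂μ = (∫⁻ x, min x⁻¹ (N:ℝ≥0∞) ∂μ).toReal := by
    intro N μ
    exact integral_toReal (hminmeas N).aemeasurable
      (Eventually.of_forall fun x =>
        lt_of_le_of_lt (min_le_right _ _) (ENNReal.natCast_lt_top N))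
  -- the main convergence of ∫ (1/x) f dμ_t
  have hmain : Tendsto (fun t : ℝ => ∫ x, (x⁻¹).toReal * f x ∂(empMass m t)) atTop (𝓝 I) := by
    rw [Metric.tendsto_nhds]
    intro ε hε
    -- truncated lintegrals at μ* converge to R as N → ∞
    have hδstar : Tendsto (fun N : ℕ => (∫⁻ x, min x⁻¹ (N:ℝ≥0∞) ∂mustar).toReal)
        atTop (𝓝 R) := by
      have hlim : Tendsto (fun N : ℕ => ∫⁻ x, min x⁻¹ (N:ℝ≥0∞) ∂mustar) atTop
          (𝓝 (∫⁻ x, x⁻¹ ∂mustar)) := by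
        apply lintegral_tendsto_of_tendsto_of_monotone
        · exact fun N => (hminmeas N).aemeasurable
        · exact Eventually.of_forall fun x i j hij =>
            min_le_min le_rfl (by exact_mod_cast Nat.cast_le.2 hij)
        · refine Eventually.of_forall fun x => ?_
          have hc : Continuous fun y : ℝ≥0∞ => min x⁻¹ y := continuous_const.min continuous_id
          have h4 := (hc.tendsto (⊤:ℝ≥0∞)).comp ENNReal.tendsto_nat_nhds_top
          simpa [Function.comp_def, min_eq_left (le_top : x⁻¹ ≤ (⊤:ℝ≥0∞))] using h4
      exact (ENNReal.tendsto_toReal hfin.ne).comp hlim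
    have hzero : Tendsto (fun N : ℕ =>
        C * (R - (∫⁻ x, min x⁻¹ (N:ℝ≥0∞) ∂mustar).toReal)) atTop (𝓝 0) := by
      have := (tendsto_const_nhds (x := R) (f := atTop (α := ℕ))).sub hδstar
      rw [sub_self] at this
      simpa using this.const_mul C
    obtain ⟨N, hN⟩ := (hzero.eventually (eventually_lt_nhds (by positivity : (0:ℝ) < ε/6))).exists
    set bN : ℝ := (∫⁻ x, min x⁻¹ (N:ℝ≥0∞) ∂mustar).toReal with hbN
    set JN : ℝ := ∫ x, (min x⁻¹ (N:ℝ≥0∞)).toReal * f x ∂mustar with hJN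
    have hbN_le : C * (R - bN) ≥ 0 → True := fun _ => trivial
    have hstar_err : |I - JN| ≤ C * (R - bN) :=
      err_bound mustar hμ0 hfin.ne f hf hC N
    -- continuous truncation
    have hφcont : Continuous fun x : ℝ≥0∞ => (min x⁻¹ (N:ℝ≥0∞)).toReal * f x :=
      (continuous_min_inv_toReal (N:ℝ≥0∞) (ENNReal.natCast_ne_top N)).mul hf
    have hweakN := hweak _ hφcont
    have hdistN := Metric.tendsto_nhds.mp hweakN (ε/3) (by positivity)
    -- convergence of a_t and b_t
    have ha_t : Tendsto (fun t : ℝ => (∫⁻ x, x⁻¹ ∂(empMass m t)).toReal) atTop (𝓝 R) :=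
      (ENNReal.tendsto_toReal hfin.ne).comp hwplus
    have hb_t : Tendsto (fun t : ℝ => (∫⁻ x, min x⁻¹ (N:ℝ≥0∞) ∂(empMass m t)).toReal)
        atTop (𝓝 bN) := by
      have := hweak _ ((continuous_min_inv_toReal (N:ℝ≥0∞) (ENNReal.natCast_ne_top N)))
      rw [hmin_int_eq N mustar] at this
      refine this.congr fun t => hmin_int_eq N (empMass m t)
    have hCδt : Tendsto (fun t : ℝ => C * ((∫⁻ x, x⁻¹ ∂(empMass m t)).toReal -
        (∫⁻ x, min x⁻¹ (N:ℝ≥0∞) ∂(empMass m t)).toReal)) atTop (𝓝 (C * (R - bN))) :=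
      (ha_t.sub hb_t).const_mul C
    have hCδt_ev : ∀ᶠ t in (atTop : Filter ℝ),
        C * ((∫⁻ x, x⁻¹ ∂(empMass m t)).toReal -
          (∫⁻ x, min x⁻¹ (N:ℝ≥0∞) ∂(empMass m t)).toReal) < ε/3 :=
      hCδt.eventually_lt_const (by linarith)
    filter_upwards [eventually_gt_atTop (0:ℝ), hCδt_ev, hdistN] with t ht h1 h2
    -- error bound at μ_t
    have hμt0 : empMass m t {0} = 0 := empMass_zero m hm hdiv ht
    have hμtfin : ∫⁻ x, x⁻¹ ∂(empMass m t) ≠ ⊤ := by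
      rw [lintegral_empMass_inv m hm hdiv ht]; exact ENNReal.ofReal_ne_top
    have ht_err := err_bound (empMass m t) hμt0 hμtfin f hf hC N
    rw [Real.dist_eq] at h2 ⊢
    have habc := abs_sub_le (∫ x, (x⁻¹).toReal * f x ∂(empMass m t))
      (∫ x, (min x⁻¹ (N:ℝ≥0∞)).toReal * f x ∂(empMass m t)) I
    have habc2 := abs_sub_le (∫ x, (min x⁻¹ (N:ℝ≥0∞)).toReal * f x ∂(empMass m t)) JN I
    have h5 : |JN - I| ≤ C * (R - bN) := by rw [abs_sub_comm]; exact hstar_err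
    linarith
  -- convergence of t / ℓ_t
  have hA0' : A.toReal ≠ 0 := ENNReal.toReal_ne_zero.2 ⟨hA0, hAtop⟩
  have hquot : Tendsto (fun t : ℝ => t / (ell m t : ℝ)) atTop (𝓝 (A.toReal)⁻¹) := by
    have h1 : Tendsto (fun t : ℝ => ((ell m t : ℝ) / t)) atTop (𝓝 A.toReal) := by
      have h2 := (ENNReal.tendsto_toReal hAtop).comp hA
      refine h2.congr' ?_
      filter_upwards [eventually_gt_atTop (0:ℝ)] with t ht
      have hL : (0:ℝ) < (ell m t : ℝ) := by exact_mod_cast ell_pos m hdiv ht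
      simp [Function.comp, ENNReal.toReal_ofReal (div_nonneg hL.le ht.le)]
    have h3 := h1.inv₀ hA0'
    simpa [inv_div] using h3
  have hfinal := hquot.mul hmain
  have htarget : (1 / A.toReal) * ∫ x, (x.toReal)⁻¹ * f x ∂mustar = (A.toReal)⁻¹ * I := by
    rw [one_div, hI]
    congr 1
    refine integral_congr_ae (Eventually.of_forall fun x => ?_)
    simp [ENNReal.toReal_inv]
  rw [htarget]
  refine hfinal.congr' ?_
  filter_upwards [eventually_gt_atTop (0:ℝ)] with t ht
  exact (freq_eq_mass m hm hdiv ht f hf.measurable).symm
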